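/- If q is not a root of unity, the representation R_l^{(1)} of U_q(so_3) defined by R(I1)|m⟩ = i[m]|m⟩, R(I2)|m⟩ = (1/(q^m+q^{-m}))([l−m]|m+1⟩ − [l+m]|m−1⟩) on the (2l+1)-dimensional space with basis |m⟩, m = −l,…,l, is irreducible: any subspace invariant under R(I1) and R(I2) is 0 or the whole space. -/

import Mathlib

noncomputable section

/-- Basis vector of `Fin (n+1) → ℂ` indexed by an integer `k`;
`0` when out of range (convention `|l+1⟩ = |−l−1⟩ = 0`). -/
def e (n : ℕ) (k : ℤ) : Fin (n + 1) → ℂ := fun j => if (j : ℤ) = k then 1 else 0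

/-- `br q s (2a)` is the `q`-number `[a]` for the half-integer `a`, where `s = q^{1/2}`. -/
def br (q s : ℂ) (t : ℤ) : ℂ := (s ^ t - s ^ (-t)) / (q - q⁻¹)

section aux
variable {q s : ℂ}

lemma s_ne (hq0 : q ≠ 0) (hs : s ^ 2 = q) : s ≠ 0 := by
  rintro rfl; exact hq0 (by rw [← hs]; ring)

lemma s_zpow_two_mul (hs : s ^ 2 = q) (m : ℤ) : s ^ (2 * m) = q ^ m := by
  rw [zpow_mul, ← hs, zpow_two, ← pow_two]

lemma q_zpow_ne_one (hroot : ∀ k : ℕ, 0 < k → q ^ k ≠ 1)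
    {m : ℤ} (hm : m ≠ 0) : q ^ m ≠ 1 := by
  intro h
  have h2 : q ^ (m.natAbs : ℤ) = 1 := by
    rcases Int.natAbs_eq m with he | he
    · rw [← he]; exact h
    · rw [show (m.natAbs : ℤ) = -m by omega, zpow_neg, h, inv_one]
  rw [zpow_natCast] at h2
  exact hroot m.natAbs (by omega) h2

lemma q_zpow_ne_neg_one (hroot : ∀ k : ℕ, 0 < k → q ^ k ≠ 1)
    (m : ℤ) : q ^ m ≠ -1 := by
  intro h
  by_cases hm : m = 0
  · subst hm; simp at h
    norm_num at h
  · have : q ^ (2 * m) = 1 := by rw [mul_comm, zpow_mul, h]; ring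
    exact q_zpow_ne_one hroot (by omega) this

lemma d_ne (hq0 : q ≠ 0) (hroot : ∀ k : ℕ, 0 < k → q ^ k ≠ 1) : q - q⁻¹ ≠ 0 := by
  intro h
  have h2 : q ^ 2 = 1 := by
    have hq : q = q⁻¹ := by rwa [sub_eq_zero] at h
    field_simp at hq
    linear_combination hq
  exact hroot 2 (by omega) h2

lemma sum_ne (hq0 : q ≠ 0) (hroot : ∀ k : ℕ, 0 < k → q ^ k ≠ 1) (hs : s ^ 2 = q)
    (a : ℤ) : s ^ a + s ^ (-a) ≠ 0 := by
  intro h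
  have hsne : s ≠ 0 := s_ne hq0 hs
  have h1 : s ^ (2 * a) = -1 := by
    have := congrArg (· * s ^ a) h
    simp only [add_mul, zero_mul] at this
    rw [← zpow_add₀ hsne, ← zpow_add₀ hsne] at this
    simp at this
    rw [two_mul]
    linear_combination this
  rw [s_zpow_two_mul hs] at h1
  exact q_zpow_ne_neg_one hroot a h1

end aux

section aux2
variable {q s : ℂ}

lemma br_ne_zero (hq0 : q ≠ 0) (hroot : ∀ k : ℕ, 0 < k → q ^ k ≠ 1) (hs : s ^ 2 = q)
    {m : ℤ} (hm : m ≠ 0) : br q s (2 * m) ≠ 0 := by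
  have hsne : s ≠ 0 := s_ne hq0 hs
  unfold br
  apply div_ne_zero _ (d_ne hq0 hroot)
  rw [sub_ne_zero]
  intro h
  have h2 : q ^ (2 * m) = 1 := by
    have h3 : s ^ (2 * (2 * m)) = 1 := by
      calc s ^ (2 * (2 * m)) = s ^ (2 * m) * s ^ (2 * m) := by
            rw [two_mul, zpow_add₀ hsne]
        _ = s ^ (-(2 * m)) * s ^ (2 * m) := by rw [h]
        _ = 1 := by rw [← zpow_add₀ hsne]; simp
    rw [s_zpow_two_mul hs] at h3
    exact h3
  exact q_zpow_ne_one hroot (by omega) h2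

lemma br_inj (hq0 : q ≠ 0) (hroot : ∀ k : ℕ, 0 < k → q ^ k ≠ 1) (hs : s ^ 2 = q)
    {n : ℕ} {a b : ℤ} :
    br q s (2 * a - n) = br q s (2 * b - n) → a = b := by
  intro h
  have hsne : s ≠ 0 := s_ne hq0 hs
  have hd := d_ne hq0 hroot
  unfold br at h
  have hnum : s ^ (2*a - n) - s ^ (-(2*a - n)) = s ^ (2*b - n) - s ^ (-(2*b - n)) := by
    have := congrArg (· * (q - q⁻¹)) h
    simpa [div_mul_cancel₀, hd] using this
  set A := s ^ (2*a - (n:ℤ)) with hA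
  set B := s ^ (2*b - (n:ℤ)) with hB
  have hAne : A ≠ 0 := zpow_ne_zero _ hsne
  have hBne : B ≠ 0 := zpow_ne_zero _ hsne
  have hAinv : s ^ (-(2*a - (n:ℤ))) = A⁻¹ := by rw [zpow_neg]
  have hBinv : s ^ (-(2*b - (n:ℤ))) = B⁻¹ := by rw [zpow_neg]
  rw [hAinv, hBinv] at hnum
  have hfac : (A - B) * (1 + A⁻¹ * B⁻¹) = 0 := by
    field_simp
    field_simp at hnum
    linear_combination hnum
  rcases mul_eq_zero.mp hfac with h1 | h1
  · -- A = B
    have hAB : A = B := by linear_combination h1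
    have : s ^ (2 * (a - b)) = 1 := by
      have : A * B⁻¹ = 1 := by rw [hAB]; exact mul_inv_cancel₀ hBne
      rw [hA, hB, ← zpow_neg, ← zpow_add₀ hsne] at this
      rw [show 2 * (a - b) = (2*a - n) + -(2*b - n) by ring]
      exact this
    rw [s_zpow_two_mul hs] at this
    by_contra hab
    exact q_zpow_ne_one hroot (sub_ne_zero.mpr hab) this
  · -- A * B = -1
    exfalso
    have hAB : A * B = -1 := by
      have h2 : A⁻¹ * B⁻¹ = -1 := by linear_combination h1
      have := congrArg (· * (A * B)) h2
      field_simp at this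
      linear_combination this
    have : s ^ (2 * (a + b - n)) = -1 := by
      rw [show 2 * (a + b - n) = (2*a - n) + (2*b - n) by ring, zpow_add₀ hsne]
      exact hAB
    rw [s_zpow_two_mul hs] at this
    exact q_zpow_ne_neg_one hroot _ this

end aux2

lemma e_coe (n : ℕ) (i j : Fin (n+1)) : e n (j : ℤ) i = if i = j then 1 else 0 := by
  unfold e
  congr 1
  simp only [eq_iff_iff, Fin.ext_iff]
  omega

lemma sum_repr (n : ℕ) (v : Fin (n+1) → ℂ) :
    ∑ j : Fin (n+1), v j • e n (j : ℤ) = v := by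
  funext i
  rw [Finset.sum_apply]
  simp only [Pi.smul_apply, e_coe, smul_eq_mul]
  rw [Finset.sum_eq_single i]
  · simp
  · intro b _ hb; simp [Ne.symm hb]
  · intro h; simp at h

/-- If `q` is not a root of unity, the representation `R_l^{(1)}` of `U_q(so_3)`
(`n = 2l`) is irreducible: any subspace invariant under `R(I1)` and `R(I2)`
is `0` or the whole `(2l+1)`-dimensional space. -/
theorem stmt_6 (q s : ℂ) (hq0 : q ≠ 0)
    (hroot : ∀ k : ℕ, 0 < k → q ^ k ≠ 1) (hs : s ^ 2 = q) (n : ℕ)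
    (T1 T2 : Module.End ℂ (Fin (n + 1) → ℂ))
    (h1 : ∀ k : ℤ, 0 ≤ k → k ≤ n →
      T1 (e n k) = (Complex.I * br q s (2 * k - n)) • e n k)
    (h2 : ∀ k : ℤ, 0 ≤ k → k ≤ n →
      T2 (e n k) = (s ^ (2 * k - n) + s ^ ((n : ℤ) - 2 * k))⁻¹ •
        (br q s (2 * (n - k)) • e n (k + 1) - br q s (2 * k) • e n (k - 1))) :
    ∀ p : Submodule ℂ (Fin (n + 1) → ℂ),
      (∀ v ∈ p, T1 v ∈ p) → (∀ v ∈ p, T2 v ∈ p) → p = ⊥ ∨ p = ⊤ := by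

  intro p hp1 hp2
  by_cases hbot : p = ⊥
  · exact Or.inl hbot
  right
  have hsne : s ≠ 0 := s_ne hq0 hs
  set lam : Fin (n+1) → ℂ := fun i => Complex.I * br q s (2 * (i : ℤ) - n) with hlam
  have hb0 : ∀ j : Fin (n+1), (0 : ℤ) ≤ (j : ℤ) := fun j => Int.natCast_nonneg _
  have hbn : ∀ j : Fin (n+1), ((j : ℤ)) ≤ n := fun j => by
    have := j.isLt; omega
  -- T1 acts diagonally
  have hT1 : ∀ v : Fin (n+1) → ℂ, ∀ i, T1 v i = lam i * v i := by
    intro v i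
    conv_lhs => rw [← sum_repr n v]
    rw [map_sum, Finset.sum_apply]
    have : ∀ j : Fin (n+1), T1 (v j • e n (j:ℤ)) i = v j * (lam j * e n (j:ℤ) i) := by
      intro j
      rw [map_smul, h1 (j:ℤ) (hb0 j) (hbn j)]
      simp [hlam, mul_assoc]
    rw [Finset.sum_congr rfl (fun j _ => this j)]
    rw [Finset.sum_eq_single i]
    · simp [e_coe]; ring
    · intro b _ hb; simp [e_coe, Ne.symm hb]
    · intro h; simp at h
  -- lam is injective
  have laminj : ∀ i j : Fin (n+1), lam i = lam j → i = j := by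
    intro i j hij
    have hbr : br q s (2 * (i:ℤ) - n) = br q s (2 * (j:ℤ) - n) :=
      mul_left_cancel₀ Complex.I_ne_zero hij
    have := br_inj hq0 hroot hs hbr
    exact Fin.ext (by omega)
  -- key: invariance under products of (T1 - lam a)
  have hkey : ∀ (S : Finset (Fin (n+1))) (v : Fin (n+1) → ℂ), v ∈ p →
      ∃ w ∈ p, ∀ i, w i = (∏ a ∈ S, (lam i - lam a)) * v i := by
    intro S
    induction S using Finset.induction_on with
    | empty => intro v hv; exact ⟨v, hv, fun i => by simp⟩
    | insert b S' hb ih =>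
      intro v hv
      obtain ⟨w, hw, hwc⟩ := ih v hv
      refine ⟨T1 w - lam b • w, sub_mem (hp1 w hw) (p.smul_mem _ hw), fun i => ?_⟩
      rw [Finset.prod_insert hb]
      have : (T1 w - lam b • w) i = (lam i - lam b) * w i := by
        simp [hT1 w i]; ring
      rw [this, hwc]; ring
  -- component extraction
  have hcomp : ∀ v ∈ p, ∀ j : Fin (n+1), (v j) • e n (j:ℤ) ∈ p := by
    intro v hv j
    obtain ⟨w, hw, hwc⟩ := hkey (Finset.univ.erase j) v hv
    set c : ℂ := ∏ a ∈ Finset.univ.erase j, (lam j - lam a) with hc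
    have hcne : c ≠ 0 := by
      rw [hc]
      apply Finset.prod_ne_zero_iff.mpr
      intro a ha h0
      have haj : a = j := laminj a j (by linear_combination -h0)
      exact (Finset.mem_erase.mp ha).1 haj
    have hw_eq : w = c • ((v j) • e n (j:ℤ)) := by
      funext i
      by_cases hij : i = j
      · subst hij
        simp [hwc i, e_coe, hc]
      · have hzero : w i = 0 := by
          rw [hwc i]
          apply mul_eq_zero_of_left
          apply Finset.prod_eq_zero (Finset.mem_erase.mpr ⟨hij, Finset.mem_univ i⟩)
          ring
        simp [hzero, e_coe, hij]
    have := p.smul_mem c⁻¹ hw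
    rw [hw_eq, smul_smul, inv_mul_cancel₀ hcne, one_smul] at this
    exact this
  -- nonzero scalar cancellation
  have hsc : ∀ (c : ℂ) (k : ℤ), c ≠ 0 → c • e n k ∈ p → e n k ∈ p := by
    intro c k hc hm
    have := p.smul_mem c⁻¹ hm
    rwa [smul_smul, inv_mul_cancel₀ hc, one_smul] at this
  -- up step
  have hup : ∀ j : Fin (n+1), (j : ℕ) < n → e n (j:ℤ) ∈ p → e n ((j:ℤ)+1) ∈ p := by
    intro j hj hje
    have hw := hp2 _ hje
    rw [h2 (j:ℤ) (hb0 j) (hbn j)] at hw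
    set k : ℤ := (j:ℤ) with hk
    set j' : Fin (n+1) := ⟨(j:ℕ)+1, by omega⟩ with hj'
    have hj'k : (j' : ℤ) = k + 1 := by simp [hj', hk]
    have h3 := hcomp _ hw j'
    have hco : ((s ^ (2*k - (n:ℤ)) + s ^ ((n:ℤ) - 2*k))⁻¹ •
        (br q s (2 * ((n:ℤ) - k)) • e n (k+1) - br q s (2*k) • e n (k-1))) j'
        = (s ^ (2*k - (n:ℤ)) + s ^ ((n:ℤ) - 2*k))⁻¹ * br q s (2 * ((n:ℤ) - k)) := by
      have e1 : e n (k+1) j' = 1 := by unfold e; rw [if_pos hj'k]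
      have e2 : e n (k-1) j' = 0 := by
        unfold e; rw [if_neg (by rw [hj'k]; omega)]
      simp [e1, e2]
    rw [hco] at h3
    have hc1 : (s ^ (2*k - (n:ℤ)) + s ^ ((n:ℤ) - 2*k))⁻¹ ≠ 0 := by
      apply inv_ne_zero
      have := sum_ne hq0 hroot hs (2*k - n)
      rwa [show (n:ℤ) - 2*k = -(2*k - n) by ring]
    have hc2 : br q s (2 * ((n:ℤ) - k)) ≠ 0 := by
      apply br_ne_zero hq0 hroot hs
      have : k < n := by rw [hk]; exact_mod_cast hj
      omega
    rw [hj'k] at h3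
    exact hsc _ _ (mul_ne_zero hc1 hc2) h3
  -- down step
  have hdown : ∀ j : Fin (n+1), 0 < (j : ℕ) → e n (j:ℤ) ∈ p → e n ((j:ℤ)-1) ∈ p := by
    intro j hj hje
    have hw := hp2 _ hje
    rw [h2 (j:ℤ) (hb0 j) (hbn j)] at hw
    set k : ℤ := (j:ℤ) with hk
    set j' : Fin (n+1) := ⟨(j:ℕ)-1, by omega⟩ with hj'
    have hj'k : (j' : ℤ) = k - 1 := by simp [hj', hk]; omega
    have h3 := hcomp _ hw j'
    have hco : ((s ^ (2*k - (n:ℤ)) + s ^ ((n:ℤ) - 2*k))⁻¹ •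
        (br q s (2 * ((n:ℤ) - k)) • e n (k+1) - br q s (2*k) • e n (k-1))) j'
        = (s ^ (2*k - (n:ℤ)) + s ^ ((n:ℤ) - 2*k))⁻¹ * (- br q s (2*k)) := by
      have e1 : e n (k+1) j' = 0 := by
        unfold e; rw [if_neg (by rw [hj'k]; omega)]
      have e2 : e n (k-1) j' = 1 := by unfold e; rw [if_pos hj'k]
      simp [e1, e2]
    rw [hco] at h3
    have hc1 : (s ^ (2*k - (n:ℤ)) + s ^ ((n:ℤ) - 2*k))⁻¹ ≠ 0 := by
      apply inv_ne_zero
      have := sum_ne hq0 hroot hs (2*k - n)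
      rwa [show (n:ℤ) - 2*k = -(2*k - n) by ring]
    have hc2 : - br q s (2*k) ≠ 0 := by
      apply neg_ne_zero.mpr
      apply br_ne_zero hq0 hroot hs
      have : 0 < k := by rw [hk]; exact_mod_cast hj
      omega
    rw [hj'k] at h3
    exact hsc _ _ (mul_ne_zero hc1 hc2) h3
  -- get a first basis vector in p
  obtain ⟨v, hv, hvne⟩ := (Submodule.ne_bot_iff p).mp hbot
  obtain ⟨j0, hj0⟩ := Function.ne_iff.mp hvne
  have hj0p : e n ((j0:ℤ)) ∈ p := hsc _ _ (by simpa using hj0) (hcomp v hv j0)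
  -- descend to 0
  have hdownall : ∀ m : ℕ, ∀ j : Fin (n+1), (j:ℕ) = m → e n (j:ℤ) ∈ p →
      e n 0 ∈ p := by
    intro m
    induction m with
    | zero =>
      intro j hj hje
      rwa [show ((j:ℤ)) = 0 by omega] at hje
    | succ m ih =>
      intro j hj hje
      have hstep := hdown j (by omega) hje
      set j' : Fin (n+1) := ⟨m, by omega⟩ with hj'
      have hmem : e n ((j':ℤ)) ∈ p := by
        rwa [show ((j':ℤ)) = (j:ℤ) - 1 by simp [hj']; omega]
      exact ih j' (by simp [hj']) hmem
  have h0 : e n 0 ∈ p := hdownall (j0:ℕ) j0 rfl hj0p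
  -- ascend to everything
  have hupall : ∀ m : ℕ, m ≤ n → e n (m:ℤ) ∈ p := by
    intro m
    induction m with
    | zero => intro _; simpa using h0
    | succ m ih =>
      intro hm
      have hmem := ih (by omega)
      set j : Fin (n+1) := ⟨m, by omega⟩ with hj
      have hjm : e n ((j:ℤ)) ∈ p := by
        rwa [show ((j:ℤ)) = (m:ℤ) by simp [hj]]
      have hstep := hup j (by simp [hj]; omega) hjm
      rwa [show ((j:ℤ)) + 1 = ((m+1 : ℕ):ℤ) by simp [hj]] at hstep
  -- conclude
  rw [eq_top_iff]
  intro u _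
  rw [← sum_repr n u]
  refine Submodule.sum_mem p fun j _ => p.smul_mem _ ?_
  have := hupall (j:ℕ) (by omega)
  rwa [show (((j:ℕ):ℕ):ℤ) = ((j:ℤ)) by omega] at this
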